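/- Let a, b, c, d be natural numbers and let x, y be natural numbers with x ≤ min(a,c) and y ≤ min(b,d). Let A_{x,y} be the 4×4 matrix with rows (a−x, 0, x, 0), (0, b−y, 0, y), (x, 0, c−x, 0), (0, y, 0, d−y). Then for 𝐢 = (1,2,1,2), the quadratic form satisfies q(A_{x,y}) = −2(x−y)² + 2x(a + c − 2b) + 2y(b + d − 2c). -/

import Mathlib

/-- The Euler form `⟨i,j⟩` of the Kronecker quiver Cartan datum on `I = {1,2}`:
`⟨1,1⟩ = ⟨2,2⟩ = 1`, `⟨1,2⟩ = -2`, `⟨2,1⟩ = 0`. -/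
def kroneckerAngle : ℕ → ℕ → ℤ
  | 1, 1 => 1
  | 2, 2 => 1
  | 1, 2 => -2
  | 2, 1 => 0
  | _, _ => 0

/-- The symmetric bilinear form `i · j = ⟨i,j⟩ + ⟨j,i⟩`. -/
def kroneckerDot (i j : ℕ) : ℤ := kroneckerAngle i j + kroneckerAngle j i

/-- The quadratic form `q(A)` associated to a sequence `iseq = (i₁,…,i_t)` and a `t × t`
matrix `A` with natural number entries:
`q(A) = ∑_{m} ∑_{p<r} ⟨i_m,i_m⟩ a_{p,m} a_{r,m} + ∑_{p<r, l<m} (i_l·i_m) a_{p,m} a_{r,l}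
      + ∑_{r} ∑_{l<m} ⟨i_r,i_r⟩ a_{r,m} a_{r,l}`. -/
def qform {t : ℕ} (iseq : Fin t → ℕ) (A : Matrix (Fin t) (Fin t) ℕ) : ℤ :=
  (∑ m : Fin t, ∑ p : Fin t, ∑ r : Fin t,
      if p < r then kroneckerAngle (iseq m) (iseq m) * (A p m : ℤ) * (A r m : ℤ) else 0)
  + (∑ p : Fin t, ∑ r : Fin t, ∑ l : Fin t, ∑ m : Fin t,
      if p < r ∧ l < m then kroneckerDot (iseq l) (iseq m) * (A p m : ℤ) * (A r l : ℤ) else 0)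
  + (∑ r : Fin t, ∑ l : Fin t, ∑ m : Fin t,
      if l < m then kroneckerAngle (iseq r) (iseq r) * (A r m : ℤ) * (A r l : ℤ) else 0)

/-- `A ∈ 𝓜_{iseq,aseq}`: all row and column sums of `A` are prescribed by `aseq`, and
`a_{r,m} = 0` unless `i_r = i_m`. -/
def MemM {t : ℕ} (iseq : Fin t → ℕ) (aseq : Fin t → ℕ) (A : Matrix (Fin t) (Fin t) ℕ) : Prop :=
  (∀ r, ∑ m, A r m = aseq r) ∧ (∀ r, ∑ m, A m r = aseq r) ∧
    (∀ r m, iseq r ≠ iseq m → A r m = 0)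

/-- For natural numbers `a, b, c, d` and `x ≤ min a c`, `y ≤ min b d`, with
`iseq = (1,2,1,2)`, the quadratic form of the matrix `A_{x,y}` with rows
`(a-x, 0, x, 0)`, `(0, b-y, 0, y)`, `(x, 0, c-x, 0)`, `(0, y, 0, d-y)` equals
`-2(x-y)² + 2x(a + c - 2b) + 2y(b + d - 2c)`. -/
theorem qform_value_four_terms (a b c d x y : ℕ) (hx : x ≤ min a c) (hy : y ≤ min b d) :
    qform ![1, 2, 1, 2]
        !![a - x, 0, x, 0; 0, b - y, 0, y; x, 0, c - x, 0; 0, y, 0, d - y]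
      = -2 * ((x : ℤ) - (y : ℤ)) ^ 2 + 2 * (x : ℤ) * ((a : ℤ) + (c : ℤ) - 2 * (b : ℤ))
          + 2 * (y : ℤ) * ((b : ℤ) + (d : ℤ) - 2 * (c : ℤ)) := by
  have hxa : x ≤ a := le_trans hx (min_le_left _ _)
  have hxc : x ≤ c := le_trans hx (min_le_right _ _)
  have hyb : y ≤ b := le_trans hy (min_le_left _ _)
  have hyd : y ≤ d := le_trans hy (min_le_right _ _)
  simp only [qform, Fin.sum_univ_four, Matrix.cons_val', Matrix.cons_val_zero,
    Matrix.cons_val_one, Matrix.head_cons, Matrix.cons_val_fin_one, Matrix.empty_val',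
    Matrix.cons_val_succ, Matrix.head_fin_const, Matrix.of_apply, Fin.lt_def,
    Fin.val_zero, Fin.val_one, Fin.val_two, show ((3:Fin 4):ℕ)=3 from rfl, Matrix.cons_val]
  norm_num [kroneckerAngle, kroneckerDot, Nat.cast_sub hxa, Nat.cast_sub hxc,
    Nat.cast_sub hyb, Nat.cast_sub hyd]
  ring
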